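/- For b ∈ ℝ^n off the discriminant Δ, the time α(b) needed for the Hamiltonian flow of F₁ to carry the section Σ⁻(b) to the T^{n−1}-orbit of Σ⁺(b) satisfies α(b) = −∫_{ζ₀(b)}^{ζ₁(b)} dx / √(P_b(x)), where ζ₀(b) is the maximal real root of P_b(x) = x(x−b₂)⋯(x−bₙ) − b₁² and ζ₁(b) the maximal real solution of P_b(x) = 1. -/

import Mathlib

open Finset in
theorem Xform (n : ℕ) (F₁ : (Fin (n+1) → ℂ) → ℝ) (hF₁ : ∀ z, F₁ z = (∏ i, z i).im)
    (X : (Fin (n+1) → ℂ) → (Fin (n+1) → ℂ))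
    (hX : ∀ z v, (∑ k, ((v k).re * (X z k).im - (v k).im * (X z k).re)) = fderiv ℝ F₁ z v) :
    ∀ z k, X z k = - (starRingEnd ℂ) (∏ i ∈ Finset.univ.erase k, z i) := by
  intro z k
  have hF₁fun : F₁ = fun z => (∏ i, z i).im := funext hF₁
  have hprod : HasFDerivAt (fun y : Fin (n+1) → ℂ => ∏ i, y i)
      (∑ i : Fin (n+1), (∏ j ∈ Finset.univ.erase i, z j) • ContinuousLinearMap.proj (R := ℝ) (φ := fun _ : Fin (n+1) => ℂ) i) z := by
    exact hasFDerivAt_finset_prod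
  have hF : HasFDerivAt F₁
      (Complex.imCLM.comp (∑ i : Fin (n+1), (∏ j ∈ Finset.univ.erase i, z j) • ContinuousLinearMap.proj (R := ℝ) i)) z := by
    rw [hF₁fun]
    exact Complex.imCLM.hasFDerivAt.comp z hprod
  have hfd := hF.fderiv
  have key : ∀ v : Fin (n+1) → ℂ, (∑ j, ((v j).re * (X z j).im - (v j).im * (X z j).re))
      = ((∑ i : Fin (n+1), (∏ j ∈ Finset.univ.erase i, z j) * v i)).im := by
    intro v
    rw [hX z v, hfd]
    simp [ContinuousLinearMap.sum_apply]
  have h1 := key (Pi.single k 1)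
  have h2 := key (Pi.single k Complex.I)
  rw [Finset.sum_eq_single k (by intro j _ hj; simp [Pi.single_eq_of_ne hj])
    (by simp)] at h1 h2
  rw [Finset.sum_eq_single k (by intro j _ hj; simp [Pi.single_eq_of_ne hj])
    (by simp)] at h1 h2
  simp at h1 h2
  apply Complex.ext
  · rw [Complex.neg_re, Complex.conj_re]; linarith [h2]
  · rw [Complex.neg_im, Complex.conj_im]; linarith [h1]


open Finset in
theorem polyAux {n : ℕ} (a : Fin (n+1) → ℝ) (c : ℝ) (hc : 0 ≤ c) (q : ℝ → ℝ)
    (hq : ∀ x, q x = (∏ k, (x - a k)) - c)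
    (z0 z1 : ℝ) (h0 : q z0 = 0) (h0m : ∀ x, q x = 0 → x ≤ z0)
    (h1 : q z1 = 1) (h1m : ∀ x, q x = 1 → x ≤ z1) :
    (∀ x, q x ≤ 0 → x ≤ z0) ∧ (∀ x, q x ≤ 1 → x ≤ z1) ∧ z0 < z1 ∧ (∀ k, a k ≤ z0)
      ∧ (∀ x, z0 < x → 0 < q x) := by
  have hqc : Continuous q := by
    have : (fun x => (∏ k, (x - a k)) - c) = q := funext fun x => (hq x).symm
    rw [← this]
    exact (continuous_finset_prod _ fun k _ => by fun_prop).sub continuous_const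
  have big : ∀ C : ℝ, ∃ M, ∀ x, M ≤ x → C < q x := by
    intro C
    obtain ⟨A, hA⟩ : ∃ A, ∀ k, a k ≤ A :=
      ⟨Finset.univ.sup' ⟨0, Finset.mem_univ 0⟩ a, fun k => Finset.le_sup' a (mem_univ k)⟩
    refine ⟨A + max 1 (C + c + 1), fun x hx => ?_⟩
    have hfac : ∀ k, max 1 (C + c + 1) ≤ x - a k := fun k => by
      have := hA k; linarith
    have hprod : max 1 (C + c + 1) ≤ ∏ k, (x - a k) := by
      calc max 1 (C + c + 1)
          = ∏ k : Fin (n+1), (if k = 0 then max 1 (C + c + 1) else 1) := by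
            rw [Finset.prod_ite_eq' Finset.univ (0 : Fin (n+1))
              (fun _ => max 1 (C + c + 1))]
            simp
        _ ≤ ∏ k : Fin (n+1), (x - a k) := by
            apply Finset.prod_le_prod
            · intro k _; positivity
            · intro k _
              rcases eq_or_ne k 0 with h | h
              · subst h; rw [if_pos rfl]; exact hfac 0
              · rw [if_neg h]; exact le_trans (le_max_left _ _) (hfac k)
    have : C + c + 1 ≤ ∏ k, (x - a k) := le_trans (le_max_right _ _) hprod
    rw [hq]; linarith
  have L1 : ∀ x, q x ≤ 0 → x ≤ z0 := by
    intro x hx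
    by_contra hgt
    push_neg at hgt
    obtain ⟨M, hM⟩ := big 0
    set y := max x M with hy
    have hqy : 0 < q y := hM y (le_max_right _ _)
    have hxy : x ≤ y := le_max_left _ _
    have := intermediate_value_Icc hxy hqc.continuousOn (Set.mem_Icc.mpr ⟨hx, hqy.le⟩)
    obtain ⟨r, hr, hr0⟩ := this
    have := h0m r hr0
    have := hr.1
    linarith
  have L2 : ∀ x, q x ≤ 1 → x ≤ z1 := by
    intro x hx
    by_contra hgt
    push_neg at hgt
    obtain ⟨M, hM⟩ := big 1
    set y := max x M with hy
    have hqy : 1 < q y := hM y (le_max_right _ _)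
    have hxy : x ≤ y := le_max_left _ _
    have := intermediate_value_Icc hxy hqc.continuousOn (Set.mem_Icc.mpr ⟨hx, hqy.le⟩)
    obtain ⟨r, hr, hr0⟩ := this
    have := h1m r hr0
    have := hr.1
    linarith
  refine ⟨L1, L2, ?_, fun k => ?_, fun x hx => ?_⟩
  · obtain ⟨M, hM⟩ := big 1
    set y := max (z0 + 1) M with hy
    have hqy : 1 < q y := hM y (le_max_right _ _)
    have hzy : z0 ≤ y := le_trans (by linarith) (le_max_left _ _)
    have := intermediate_value_Icc hzy hqc.continuousOn
      (Set.mem_Icc.mpr ⟨by rw [h0]; norm_num, hqy.le⟩)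
    obtain ⟨r, hr, hr1⟩ := this
    have hrz1 := h1m r hr1
    have hrne : r ≠ z0 := fun h => by rw [h, h0] at hr1; norm_num at hr1
    rcases lt_or_eq_of_le hr.1 with h | h
    · linarith
    · exact absurd h.symm hrne
  · apply L1
    rw [hq, Finset.prod_eq_zero (Finset.mem_univ k) (sub_self (a k))]
    linarith
  · by_contra h
    push_neg at h
    exact absurd (L1 x h) (not_le.mpr hx)


open MeasureTheory Set in
theorem integrAux (q : ℝ → ℝ) (hqc : Continuous q) (z0 z1 : ℝ) (h01 : z0 < z1)
    (hq0 : q z0 = 0) (hpos : ∀ x, z0 < x → 0 < q x)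
    (D : ℝ) (hD : HasDerivAt q D z0) (hDpos : 0 < D) :
    IntervalIntegrable (fun x => 1 / Real.sqrt (q x)) volume z0 z1 := by
  classical
  set r : ℝ → ℝ := fun x => if x = z0 then D else q x / (x - z0) with hr
  have hrz0 : r z0 = D := if_pos rfl
  have hrcont : ContinuousOn r (Icc z0 z1) := by
    intro y hy
    rcases eq_or_ne y z0 with heq | hne
    · rw [heq]
      have hslope : Filter.Tendsto (slope q z0) (nhdsWithin z0 (Icc z0 z1 \ {z0})) (nhds D) :=
        hasDerivWithinAt_iff_tendsto_slope.mp (hD.hasDerivWithinAt (s := Icc z0 z1))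
      have hcongr : Filter.Tendsto r (nhdsWithin z0 (Icc z0 z1 \ {z0})) (nhds D) := by
        apply hslope.congr'
        filter_upwards [self_mem_nhdsWithin] with x hx
        have hxne : x ≠ z0 := by simpa using hx.2
        rw [slope_def_field, hq0, sub_zero, hr]
        exact (if_neg hxne).symm
      have hins : insert z0 (Icc z0 z1 \ {z0}) = Icc z0 z1 := by
        rw [Set.insert_diff_singleton, Set.insert_eq_self]
        exact Set.left_mem_Icc.mpr h01.le
      unfold ContinuousWithinAt
      rw [hrz0, ← hins, nhdsWithin_insert]
      refine Filter.Tendsto.sup ?_ hcongr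
      have hp := tendsto_pure_nhds r z0
      rwa [hrz0] at hp
    · have hqcont : ContinuousAt (fun x => q x / (x - z0)) y :=
        (hqc.continuousAt).div (by fun_prop) (sub_ne_zero.mpr hne)
      have : r =ᶠ[nhds y] fun x => q x / (x - z0) := by
        filter_upwards [eventually_ne_nhds hne] with x hx
        rw [hr]; simp only [if_neg hx]
      exact ((hqcont.congr this.symm)).continuousWithinAt
  have hrpos : ∀ y ∈ Icc z0 z1, 0 < r y := by
    intro y hy
    rcases eq_or_ne y z0 with rfl | hne
    · rw [hrz0]; exact hDpos
    · have hy0 : z0 < y := lt_of_le_of_ne hy.1 (Ne.symm hne)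
      rw [hr]; simp only [if_neg hne]
      exact div_pos (hpos y hy0) (by linarith)
  obtain ⟨y0, hy0mem, hy0min⟩ :=
    isCompact_Icc.exists_isMinOn (Set.nonempty_Icc.mpr h01.le) hrcont
  set c := r y0 with hc
  have hcpos : 0 < c := hrpos y0 hy0mem
  have hqlb : ∀ x ∈ Ioc z0 z1, c * (x - z0) ≤ q x := by
    intro x hx
    have hxne : x ≠ z0 := ne_of_gt hx.1
    have hrx : r x = q x / (x - z0) := if_neg hxne
    have hcx : c ≤ r x := hy0min ⟨hx.1.le, hx.2⟩
    rw [hrx] at hcx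
    have hxpos : 0 < x - z0 := by linarith [hx.1]
    calc c * (x - z0) ≤ (q x / (x - z0)) * (x - z0) := by nlinarith
      _ = q x := div_mul_cancel₀ _ (ne_of_gt hxpos)
  -- integrable comparison function
  have hg0 : IntervalIntegrable (fun x => (Real.sqrt c)⁻¹ * ((x - z0) ^ (-(1/2) : ℝ)))
      volume z0 z1 := by
    have h1 : IntervalIntegrable (fun x : ℝ => x ^ (-(1/2) : ℝ)) volume 0 (z1 - z0) :=
      intervalIntegral.intervalIntegrable_rpow' (by norm_num)
    have h2 := (h1.comp_sub_right z0).const_mul (Real.sqrt c)⁻¹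
    simpa using h2
  apply hg0.mono_fun'
  · apply Measurable.aestronglyMeasurable
    have : Measurable fun x => (Real.sqrt (q x))⁻¹ :=
      ((Real.continuous_sqrt.comp hqc).measurable).inv
    simpa [one_div] using this
  · rw [Filter.EventuallyLE]
    have huIoc : Set.uIoc z0 z1 = Ioc z0 z1 := Set.uIoc_of_le h01.le
    rw [ae_restrict_iff' (by rw [huIoc]; exact measurableSet_Ioc)]
    apply Filter.Eventually.of_forall
    intro x hx
    rw [huIoc] at hx
    have hxpos : 0 < x - z0 := by linarith [hx.1]
    have hqx : 0 < q x := hpos x hx.1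
    have hlb : 0 < c * (x - z0) := by positivity
    have hsq : Real.sqrt (c * (x - z0)) ≤ Real.sqrt (q x) :=
      Real.sqrt_le_sqrt (hqlb x hx)
    have hsqlb : 0 < Real.sqrt (c * (x - z0)) := Real.sqrt_pos.mpr hlb
    have : 1 / Real.sqrt (q x) ≤ 1 / Real.sqrt (c * (x - z0)) := by
      apply one_div_le_one_div_of_le hsqlb hsq
    have heq : 1 / Real.sqrt (c * (x - z0))
        = (Real.sqrt c)⁻¹ * ((x - z0) ^ (-(1/2) : ℝ)) := by
      rw [Real.sqrt_mul hcpos.le, Real.rpow_neg hxpos.le,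
        ← Real.sqrt_eq_rpow]
      field_simp
    rw [Real.norm_eq_abs, abs_of_nonneg (by positivity)]
    rw [heq] at this
    exact this


open Finset in
theorem sqrtProd {ι : Type*} (s : Finset ι) (a : ι → ℝ) (h : ∀ k ∈ s, 0 ≤ a k) :
    Real.sqrt (∏ k ∈ s, a k) = ∏ k ∈ s, Real.sqrt (a k) := by
  classical
  induction s using Finset.cons_induction with
  | empty => simp
  | cons k s hk ih =>
    rw [Finset.prod_cons, Finset.prod_cons,
      Real.sqrt_mul (h k (Finset.mem_cons_self _ _)),
      ih (fun j hj => h j (Finset.mem_cons.mpr (Or.inr hj)))]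


open Finset MeasureTheory Set in
/-- For `b ∉ Δ` (expressed by `P_b'(ζ₀(b)) ≠ 0`), the time `α` at which the
Hamiltonian flow `φ` of `F₁(z) = Im(∏ zᵢ)` (with respect to the standard
symplectic form, `ω(v, X z) = dF₁(z) v`), starting at the section point
`Σ⁻(b)`, reaches the `T^{n−1}`-orbit of `Σ⁺(b)` satisfies
`α = −∫_{ζ₀(b)}^{ζ₁(b)} dx / √(P_b(x))`, where `ζ₀(b)` is the maximal real root
of `P_b(x) = x(x−b₂)⋯(x−bₙ) − b₁²` and `ζ₁(b)` the maximal real solution of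
`P_b(x) = 1`. -/
theorem statement10 (n : ℕ)
    (F₁ : (Fin (n + 1) → ℂ) → ℝ) (hF₁ : ∀ z, F₁ z = (∏ i, z i).im)
    (X : (Fin (n + 1) → ℂ) → (Fin (n + 1) → ℂ))
    (hX : ∀ z v, (∑ k, ((v k).re * (X z k).im - (v k).im * (X z k).re))
      = fderiv ℝ F₁ z v)
    (P : (Fin (n + 1) → ℝ) → ℝ → ℝ)
    (hP : ∀ b x, P b x =
      x * (∏ j ∈ Finset.univ.erase (0 : Fin (n + 1)), (x - b j)) - (b 0) ^ 2)
    (ζ₀ ζ₁ : (Fin (n + 1) → ℝ) → ℝ)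
    (hζ₀root : ∀ b, P b (ζ₀ b) = 0) (hζ₀max : ∀ b x, P b x = 0 → x ≤ ζ₀ b)
    (hζ₁root : ∀ b, P b (ζ₁ b) = 1) (hζ₁max : ∀ b x, P b x = 1 → x ≤ ζ₁ b)
    (b : Fin (n + 1) → ℝ)
    (hreg : deriv (fun x => P b x) (ζ₀ b) ≠ 0)
    (zm zp : Fin (n + 1) → ℂ)
    (hzm0 : zm 0 = (Real.sqrt (ζ₁ b) : ℂ) *
      Complex.exp ((Complex.arg (-1 + (b 0 : ℂ) * Complex.I) : ℂ) * Complex.I))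
    (hzmk : ∀ k : Fin (n + 1), k ≠ 0 → zm k = (Real.sqrt (ζ₁ b - b k) : ℂ))
    (hzp0 : zp 0 = (Real.sqrt (ζ₁ b) : ℂ) *
      Complex.exp ((Complex.arg (1 + (b 0 : ℂ) * Complex.I) : ℂ) * Complex.I))
    (hzpk : ∀ k : Fin (n + 1), k ≠ 0 → zp k = (Real.sqrt (ζ₁ b - b k) : ℂ))
    (α : ℝ) (φ : ℝ → (Fin (n + 1) → ℂ))
    (hφ0 : φ 0 = zm)
    (hφ : ∀ t ∈ Set.uIcc (0 : ℝ) α, HasDerivAt φ (X (φ t)) t)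
    (horb : ∃ θ : Fin (n + 1) → ℝ, (∑ k, θ k) = 0 ∧
      ∀ k, φ α k = Complex.exp ((θ k : ℂ) * Complex.I) * zp k) :
    α = - ∫ x in (ζ₀ b)..(ζ₁ b), 1 / Real.sqrt (P b x) := by
  classical
  obtain ⟨θ, hθsum, hθ⟩ := horb
  set bt : Fin (n + 1) → ℝ := fun k => if k = 0 then 0 else b k with hbtdef
  have hbt0 : bt 0 = 0 := if_pos rfl
  have hbtk : ∀ k : Fin (n+1), k ≠ 0 → bt k = b k := fun k hk => if_neg hk
  -- polynomial represented as full product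
  have hPfun : ∀ x, P b x = (∏ k, (x - bt k)) - (b 0)^2 := by
    intro x
    rw [hP]
    congr 1
    rw [← Finset.mul_prod_erase Finset.univ (fun k => x - bt k) (Finset.mem_univ 0), hbt0,
      sub_zero]
    exact congrArg (x * ·)
      (Finset.prod_congr rfl fun k hk => by rw [hbtk k (Finset.mem_erase.mp hk).1]).symm
  have hPeq : P b = fun x => (∏ k, (x - bt k)) - (b 0)^2 := funext hPfun
  have hPcont : Continuous (P b) := by
    rw [hPeq]
    exact (continuous_finset_prod _ fun k _ => by fun_prop).sub continuous_const
  obtain ⟨L1, L2, h01, hbtle, hPpos⟩ := polyAux bt ((b 0)^2) (sq_nonneg _) (P b) hPfun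
    (ζ₀ b) (ζ₁ b) (hζ₀root b) (hζ₀max b) (hζ₁root b) (hζ₁max b)
  have hz0nonneg : 0 ≤ ζ₀ b := by
    apply L1
    rw [hP]
    simp
    positivity
  have hz1nonneg : 0 ≤ ζ₁ b := le_trans hz0nonneg h01.le
  -- derivative of P b
  have hPd : ∀ y : ℝ, HasDerivAt (P b)
      (∑ k, ∏ i ∈ Finset.univ.erase k, (y - bt i)) y := by
    intro y
    rw [hPeq]
    have h := HasDerivAt.finset_prod (u := Finset.univ)
      (f := fun (k : Fin (n+1)) (x : ℝ) => x - bt k) (f' := fun _ => (1:ℝ)) (x := y)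
      (fun i _ => (hasDerivAt_id y).sub_const (bt i))
    simpa using h.sub_const ((b 0)^2)
  set Dsum : ℝ := ∑ k, ∏ i ∈ Finset.univ.erase k, (ζ₀ b - bt i) with hDsum
  have hDne : Dsum ≠ 0 := by
    have := (hPd (ζ₀ b)).deriv
    rw [hDsum, ← this]
    exact hreg
  have hDpos : 0 < Dsum := by
    have hdw := (hPd (ζ₀ b)).hasDerivWithinAt (s := Set.Ioi (ζ₀ b))
    have hts := hasDerivWithinAt_iff_tendsto_slope.mp hdw
    have hset : Set.Ioi (ζ₀ b) \ {ζ₀ b} = Set.Ioi (ζ₀ b) :=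
      Set.diff_singleton_eq_self (fun h => lt_irrefl _ (Set.mem_Ioi.mp h))
    rw [hset] at hts
    have hge : 0 ≤ Dsum := by
      refine ge_of_tendsto hts ?_
      filter_upwards [self_mem_nhdsWithin] with x hx
      have hx' : ζ₀ b < x := hx
      rw [slope_def_field, hζ₀root b, sub_zero]
      exact div_nonneg (hPpos x hx').le (by linarith)
    exact lt_of_le_of_ne hge (Ne.symm hDne)
  -- negativity of P just left of ζ₀
  obtain ⟨l, hl, hsubneg⟩ : ∃ l < ζ₀ b, ∀ x ∈ Set.Ioo l (ζ₀ b), P b x < 0 := by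
    have hdw := (hPd (ζ₀ b)).hasDerivWithinAt (s := Set.Iio (ζ₀ b))
    have hts := hasDerivWithinAt_iff_tendsto_slope.mp hdw
    have hset : Set.Iio (ζ₀ b) \ {ζ₀ b} = Set.Iio (ζ₀ b) :=
      Set.diff_singleton_eq_self (fun h => lt_irrefl _ (Set.mem_Iio.mp h))
    rw [hset] at hts
    have hev : ∀ᶠ x in nhdsWithin (ζ₀ b) (Set.Iio (ζ₀ b)), P b x < 0 := by
      have hpos : ∀ᶠ x in nhdsWithin (ζ₀ b) (Set.Iio (ζ₀ b)),
          0 < slope (P b) (ζ₀ b) x :=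
        hts.eventually (eventually_gt_nhds hDpos)
      filter_upwards [hpos, self_mem_nhdsWithin] with x hx hx'
      rw [slope_def_field, hζ₀root b, sub_zero] at hx
      have hxlt : x < ζ₀ b := hx'
      rcases div_pos_iff.mp hx with ⟨h1, h2⟩ | ⟨h1, h2⟩
      · linarith
      · linarith
    rw [eventually_nhdsWithin_iff] at hev
    obtain ⟨ε, hε, hball⟩ := Metric.eventually_nhds_iff.mp hev
    refine ⟨ζ₀ b - ε, by linarith, fun x hx => ?_⟩
    refine hball ?_ hx.2
    rw [Real.dist_eq, abs_lt]
    constructor <;> [linarith [hx.1]; linarith [hx.2]]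
  -- integrability and primitive G
  have hI : IntervalIntegrable (fun x => 1 / Real.sqrt (P b x)) volume (ζ₀ b) (ζ₁ b) :=
    integrAux (P b) hPcont (ζ₀ b) (ζ₁ b) h01 (hζ₀root b) hPpos Dsum (hPd (ζ₀ b)) hDpos
  set f : ℝ → ℝ := fun x => 1 / Real.sqrt (P b x) with hfdef
  set G : ℝ → ℝ := fun y => ∫ x in (ζ₀ b)..y, f x with hGdef
  have hGcont : ContinuousOn G (Set.Icc (ζ₀ b) (ζ₁ b)) := by
    have := intervalIntegral.continuousOn_primitive_interval' hI
      (Set.left_mem_uIcc (a := ζ₀ b) (b := ζ₁ b))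
    rwa [Set.uIcc_of_le h01.le] at this
  have hfc : ContinuousOn f (Set.Ioi (ζ₀ b)) := by
    apply ContinuousOn.div continuousOn_const
      ((Real.continuous_sqrt.comp hPcont).continuousOn)
    intro x hx
    exact ne_of_gt (Real.sqrt_pos.mpr (hPpos x hx))
  have hGd : ∀ y, ζ₀ b < y → y ≤ ζ₁ b → HasDerivAt G (f y) y := by
    intro y hy1 hy2
    apply intervalIntegral.integral_hasDerivAt_right
    · exact hI.mono_set (Set.uIcc_subset_uIcc Set.left_mem_uIcc
        (by rw [Set.uIcc_of_le h01.le]; exact ⟨hy1.le, hy2⟩))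
    · exact ContinuousOn.stronglyMeasurableAtFilter isOpen_Ioi hfc y hy1
    · exact (hfc y hy1).continuousAt (Ioi_mem_nhds hy1)
  -- the Hamiltonian vector field formula
  have hXf : ∀ z k, X z k = - (starRingEnd ℂ) (∏ i ∈ Finset.univ.erase k, z i) :=
    Xform n F₁ hF₁ X hX
  have hφk : ∀ t ∈ Set.uIcc (0:ℝ) α, ∀ k, HasDerivAt (fun s => φ s k) (X (φ t) k) t :=
    fun t ht k => (hasDerivAt_pi.mp (hφ t ht)) k
  set g : ℝ → ℂ := fun t => ∏ k, φ t k with hgdef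
  set u : ℝ → ℝ := fun t => (g t).re with hudef
  set S : ℝ → ℝ := fun t => ∑ k, Complex.normSq (∏ i ∈ Finset.univ.erase k, φ t i)
    with hSdef
  have hSnonneg : ∀ t, 0 ≤ S t :=
    fun t => Finset.sum_nonneg fun k _ => Complex.normSq_nonneg _
  have hg' : ∀ t ∈ Set.uIcc (0:ℝ) α, HasDerivAt g (-(S t : ℝ) : ℂ) t := by
    intro t ht
    have h := HasDerivAt.finset_prod (u := Finset.univ)
      (f := fun (k : Fin (n+1)) (s : ℝ) => φ s k) (f' := fun k => X (φ t) k) (x := t)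
      (fun k _ => hφk t ht k)
    rw [Finset.prod_fn] at h
    refine h.congr_deriv ?_
    symm
    rw [hSdef]
    push_cast
    rw [neg_eq_iff_eq_neg, ← Finset.sum_neg_distrib]
    apply Finset.sum_congr rfl
    intro k _
    rw [smul_eq_mul, hXf]
    rw [mul_neg, ← Complex.mul_conj]
    ring
  have hu' : ∀ t ∈ Set.uIcc (0:ℝ) α, HasDerivAt u (-(S t)) t := by
    intro t ht
    have := Complex.reCLM.hasFDerivAt.comp_hasDerivAt t (hg' t ht)
    simp at this; exact this
  have hgim : ∀ t ∈ Set.uIcc (0:ℝ) α, HasDerivAt (fun s => (g s).im) 0 t := by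
    intro t ht
    have := Complex.imCLM.hasFDerivAt.comp_hasDerivAt t (hg' t ht)
    simp at this; exact this
  -- derivative of coordinate square norms
  have hxj' : ∀ t ∈ Set.uIcc (0:ℝ) α, ∀ j,
      HasDerivAt (fun s => Complex.normSq (φ s j)) (-2 * u t) t := by
    intro t ht j
    have hre : HasDerivAt (fun s => (φ s j).re) ((X (φ t) j).re) t := by
      have := Complex.reCLM.hasFDerivAt.comp_hasDerivAt t (hφk t ht j)
      simp at this; exact this
    have him : HasDerivAt (fun s => (φ s j).im) ((X (φ t) j).im) t := by
      have := Complex.imCLM.hasFDerivAt.comp_hasDerivAt t (hφk t ht j)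
      simp at this; exact this
    have hsum := (hre.mul hre).add (him.mul him)
    have heq : (fun s => Complex.normSq (φ s j))
        = fun s => (φ s j).re * (φ s j).re + (φ s j).im * (φ s j).im :=
      funext fun s => Complex.normSq_apply _
    rw [heq]
    refine hsum.congr_deriv ?_
    symm
    have hgt : φ t j * ∏ i ∈ Finset.univ.erase j, φ t i = g t :=
      Finset.mul_prod_erase Finset.univ _ (Finset.mem_univ j)
    have hu : u t = (φ t j).re * (∏ i ∈ Finset.univ.erase j, φ t i).re
        - (φ t j).im * (∏ i ∈ Finset.univ.erase j, φ t i).im := by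
      rw [hudef]
      simp only
      rw [← hgt, Complex.mul_re]
    rw [hXf (φ t) j, hu]
    simp only [Complex.neg_re, Complex.conj_re, Complex.neg_im, Complex.conj_im]
    ring
  -- constancy helper
  have hconst : ∀ (F : ℝ → ℝ), (∀ t ∈ Set.uIcc (0:ℝ) α, HasDerivAt F 0 t) →
      ∀ t ∈ Set.uIcc (0:ℝ) α, F t = F 0 := by
    intro F hF t ht
    have hsub : Set.uIcc (0:ℝ) t ⊆ Set.uIcc (0:ℝ) α :=
      Set.uIcc_subset_uIcc Set.left_mem_uIcc ht
    have := intervalIntegral.integral_eq_sub_of_hasDerivAt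
      (f := F) (f' := fun _ => (0:ℝ)) (a := 0) (b := t)
      (fun s hs => hF s (hsub hs)) intervalIntegrable_const
    simp at this
    linarith
  -- initial and final values of g
  have hprodz : ζ₁ b * ∏ k ∈ Finset.univ.erase 0, (ζ₁ b - b k) = 1 + (b 0)^2 := by
    have := hζ₁root b
    rw [hP] at this
    linarith
  have hzsub : ∀ k : Fin (n+1), k ≠ 0 → 0 ≤ ζ₁ b - b k := by
    intro k hk
    have := hbtle k
    rw [hbtk k hk] at this
    linarith
  have hsqrtprod : (Real.sqrt (ζ₁ b) : ℂ) *
      (↑(∏ k ∈ Finset.univ.erase 0, Real.sqrt (ζ₁ b - b k)) : ℂ)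
      = (Real.sqrt (1 + (b 0)^2) : ℂ) := by
    rw [← Complex.ofReal_mul]
    congr 1
    rw [← sqrtProd _ _ (fun k hk => hzsub k (Finset.mem_erase.mp hk).1),
      ← Real.sqrt_mul hz1nonneg, hprodz]
  have hgen : ∀ (zz : Fin (n+1) → ℂ) (w : ℂ),
      zz 0 = (Real.sqrt (ζ₁ b) : ℂ) * Complex.exp ((Complex.arg w : ℂ) * Complex.I) →
      (∀ k : Fin (n+1), k ≠ 0 → zz k = (Real.sqrt (ζ₁ b - b k) : ℂ)) →
      ‖w‖ = Real.sqrt (1 + (b 0)^2) → (∏ k, zz k) = w := by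
    intro zz w h0 hk habs
    have h1 : (∏ k, zz k) = zz 0 * ∏ k ∈ Finset.univ.erase 0, zz k :=
      (Finset.mul_prod_erase Finset.univ zz (Finset.mem_univ 0)).symm
    have h2 : (∏ k ∈ Finset.univ.erase 0, zz k)
        = ((∏ k ∈ Finset.univ.erase 0, Real.sqrt (ζ₁ b - b k) : ℝ) : ℂ) := by
      rw [Complex.ofReal_prod]
      exact Finset.prod_congr rfl fun k hkk => hk k (Finset.mem_erase.mp hkk).1
    rw [h1, h2, h0, mul_right_comm, hsqrtprod, ← habs]
    exact Complex.norm_mul_exp_arg_mul_I w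
  have habsm : ‖(-1 + (b 0 : ℂ) * Complex.I)‖ = Real.sqrt (1 + (b 0)^2) := by
    rw [Complex.norm_def]
    congr 1
    rw [Complex.normSq_apply]
    simp
    ring
  have habsp : ‖(1 + (b 0 : ℂ) * Complex.I)‖ = Real.sqrt (1 + (b 0)^2) := by
    rw [Complex.norm_def]
    congr 1
    rw [Complex.normSq_apply]
    simp
    ring
  have hg0 : g 0 = -1 + (b 0 : ℂ) * Complex.I := by
    rw [hgdef]
    simp only
    rw [hφ0]
    exact hgen zm _ hzm0 hzmk habsm
  have hprodzp : (∏ k, zp k) = 1 + (b 0 : ℂ) * Complex.I :=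
    hgen zp _ hzp0 hzpk habsp
  have hgα : g α = 1 + (b 0 : ℂ) * Complex.I := by
    rw [hgdef]
    simp only
    calc (∏ k, φ α k) = ∏ k, (Complex.exp ((θ k : ℂ) * Complex.I) * zp k) :=
          Finset.prod_congr rfl fun k _ => hθ k
      _ = (∏ k, Complex.exp ((θ k : ℂ) * Complex.I)) * ∏ k, zp k :=
          Finset.prod_mul_distrib
      _ = 1 + (b 0 : ℂ) * Complex.I := by
          rw [← Complex.exp_sum, hprodzp]
          have : (∑ k, (θ k : ℂ) * Complex.I) = 0 := by
            rw [← Finset.sum_mul, ← Complex.ofReal_sum, hθsum]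
            simp
          rw [this, Complex.exp_zero, one_mul]
  have hu0 : u 0 = -1 := by rw [hudef]; simp only; rw [hg0]; simp
  have huα : u α = 1 := by rw [hudef]; simp only; rw [hgα]; simp
  have hgim0 : (g 0).im = b 0 := by rw [hg0]; simp
  have hgimc : ∀ t ∈ Set.uIcc (0:ℝ) α, (g t).im = b 0 := by
    intro t ht
    rw [← hgim0]
    exact hconst (fun s => (g s).im) hgim t ht
  -- norm squares of initial data
  have hnsgen : ∀ (zz : Fin (n+1) → ℂ) (c : ℝ),
      zz 0 = (Real.sqrt (ζ₁ b) : ℂ) * Complex.exp ((c : ℂ) * Complex.I) →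
      (∀ k : Fin (n+1), k ≠ 0 → zz k = (Real.sqrt (ζ₁ b - b k) : ℂ)) →
      ∀ j, Complex.normSq (zz j) = ζ₁ b - bt j := by
    intro zz c h0 hk j
    rcases eq_or_ne j 0 with rfl | hj
    · rw [hbt0, sub_zero, h0, Complex.normSq_mul, Complex.normSq_ofReal]
      have hexp : Complex.normSq (Complex.exp ((c : ℂ) * Complex.I)) = 1 := by
        rw [Complex.normSq_eq_norm_sq, Complex.norm_exp]
        simp
      rw [hexp, mul_one, Real.mul_self_sqrt hz1nonneg]
    · rw [hk j hj, Complex.normSq_ofReal, hbtk j hj, Real.mul_self_sqrt (hzsub j hj)]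
  have hxm : ∀ j, Complex.normSq (zm j) = ζ₁ b - bt j := hnsgen zm _ hzm0 hzmk
  have hxp : ∀ j, Complex.normSq (zp j) = ζ₁ b - bt j := hnsgen zp _ hzp0 hzpk
  set x0 : ℝ → ℝ := fun t => Complex.normSq (φ t 0) with hx0def
  have hx00 : x0 0 = ζ₁ b := by
    rw [hx0def]; simp only; rw [hφ0, hxm 0, hbt0, sub_zero]
  have hx0α : x0 α = ζ₁ b := by
    rw [hx0def]; simp only [hθ 0]
    rw [Complex.normSq_mul, hxp 0, hbt0, sub_zero]
    have : Complex.normSq (Complex.exp ((θ 0 : ℂ) * Complex.I)) = 1 := by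
      rw [Complex.normSq_eq_norm_sq, Complex.norm_exp]
      simp
    rw [this, one_mul]
  have hxrel : ∀ t ∈ Set.uIcc (0:ℝ) α, ∀ j, Complex.normSq (φ t j) = x0 t - bt j := by
    intro t ht j
    have hF : ∀ s ∈ Set.uIcc (0:ℝ) α,
        HasDerivAt (fun r => Complex.normSq (φ r j) - Complex.normSq (φ r 0)) 0 s := by
      intro s hs
      have h1 := hxj' s hs j
      have h2 := hxj' s hs 0
      have := h1.sub h2
      rw [sub_self] at this; exact this
    have := hconst _ hF t ht
    have h0 : Complex.normSq (φ 0 j) - Complex.normSq (φ 0 0) = -(bt j) := by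
      rw [hφ0, hxm j, hxm 0, hbt0]; ring
    rw [h0] at this
    rw [hx0def]
    simp only
    linarith [this]
  have hPx : ∀ t ∈ Set.uIcc (0:ℝ) α, P b (x0 t) = (u t)^2 := by
    intro t ht
    have hns : Complex.normSq (g t) = ∏ k, Complex.normSq (φ t k) := by
      rw [hgdef]; simp only; rw [map_prod]
    have h1 : ∏ k, Complex.normSq (φ t k) = ∏ k, (x0 t - bt k) :=
      Finset.prod_congr rfl fun k _ => hxrel t ht k
    have h2 : Complex.normSq (g t) = (u t)^2 + (b 0)^2 := by
      rw [Complex.normSq_apply, ← hgimc t ht]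
      rw [hudef]; ring
    rw [hPfun, ← h1, ← hns, h2]
    ring
  -- u is antitone
  have hanti : AntitoneOn u (Set.uIcc (0:ℝ) α) := by
    apply antitoneOn_of_deriv_nonpos (convex_uIcc 0 α)
    · exact fun t ht => (hu' t ht).continuousAt.continuousWithinAt
    · intro t ht
      exact ((hu' t (interior_subset ht)).differentiableAt).differentiableWithinAt
    · intro t ht
      rw [(hu' t (interior_subset ht)).deriv]
      linarith [hSnonneg t]
  have hαneg : α < 0 := by
    rcases lt_trichotomy α 0 with h | h | h
    · exact h
    · exfalso; rw [h] at huα; rw [huα] at hu0; norm_num at hu0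
    · exfalso
      have := hanti (Set.left_mem_uIcc) (Set.right_mem_uIcc) h.le
      rw [hu0, huα] at this
      norm_num at this
  have hicc : Set.uIcc (0:ℝ) α = Set.Icc α 0 := Set.uIcc_of_ge hαneg.le
  have hbounds : ∀ t ∈ Set.Icc α 0, -1 ≤ u t ∧ u t ≤ 1 := by
    intro t ht
    rw [← hicc] at ht
    constructor
    · have := hanti ht (Set.left_mem_uIcc) (by rw [hicc] at ht; exact ht.2)
      rw [hu0] at this; linarith
    · have := hanti (Set.right_mem_uIcc) ht (by rw [hicc] at ht; exact ht.1)
      rw [huα] at this; linarith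
  have hxle : ∀ t ∈ Set.Icc α 0, x0 t ≤ ζ₁ b := by
    intro t ht
    apply L2
    rw [hPx t (by rw [hicc]; exact ht)]
    obtain ⟨h1, h2⟩ := hbounds t ht
    nlinarith
  have hX0cont : ContinuousOn x0 (Set.Icc α 0) := by
    intro t ht
    exact ((hxj' t (by rw [hicc]; exact ht) 0).continuousAt).continuousWithinAt
  have hxge : ∀ t ∈ Set.Icc α 0, ζ₀ b ≤ x0 t := by
    by_contra hcon
    push_neg at hcon
    obtain ⟨tb, htb, hlt⟩ := hcon
    set c := max (x0 tb) ((l + ζ₀ b)/2) with hc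
    have hcz : c < ζ₀ b := by
      rw [hc]; apply max_lt hlt; linarith
    have hlc : l < c :=
      lt_of_lt_of_le (by linarith : l < (l + ζ₀ b)/2) (le_max_right _ _)
    have hc1 : c ∈ Set.Icc (x0 tb) (x0 0) := ⟨le_max_left _ _, by rw [hx00]; linarith⟩
    have hIccsub : Set.Icc tb 0 ⊆ Set.Icc α 0 := fun s hs => ⟨le_trans htb.1 hs.1, hs.2⟩
    obtain ⟨s, hsmem, hsc⟩ :=
      intermediate_value_Icc htb.2 (hX0cont.mono hIccsub) hc1
    have hPc : P b c < 0 := hsubneg c ⟨hlc, hcz⟩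
    rw [← hsc] at hPc
    rw [hPx s (by rw [hicc]; exact hIccsub hsmem)] at hPc
    nlinarith [sq_nonneg (u s)]
  -- crossing time
  obtain ⟨ts, hts, huts⟩ : ∃ ts ∈ Set.Icc α 0, u ts = 0 := by
    have := intermediate_value_Icc' hαneg.le
      (fun t ht => ((hu' t (by rw [hicc]; exact ht)).continuousAt).continuousWithinAt)
    have h0mem : (0:ℝ) ∈ Set.Icc (u 0) (u α) := by
      rw [hu0, huα]; norm_num
    obtain ⟨ts, hts, hts0⟩ := this h0mem
    exact ⟨ts, hts, hts0⟩
  have hxts : x0 ts = ζ₀ b := by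
    apply le_antisymm
    · apply hζ₀max b
      rw [hPx ts (by rw [hicc]; exact hts), huts]
      norm_num
    · exact hxge ts hts
  -- S equals Dsum at zeros of u, so zeros are isolated/unique
  have hSDs : ∀ m ∈ Set.Icc α 0, x0 m = ζ₀ b → S m = Dsum := by
    intro m hm hxm0
    rw [hSdef, hDsum]
    apply Finset.sum_congr rfl
    intro k _
    rw [map_prod]
    exact Finset.prod_congr rfl fun i _ => by
      rw [hxrel m (by rw [hicc]; exact hm) i, hxm0]
  have huniq : ∀ r ∈ Set.Icc α 0, u r = 0 → r = ts := by
    intro r hr hur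
    by_contra hne
    -- u vanishes identically between r and ts
    have hzero : ∀ s ∈ Set.uIcc r ts, u s = 0 := by
      intro s hs
      rcases le_total r ts with h | h
      · rw [Set.uIcc_of_le h] at hs
        have h1 := hanti (by rw [hicc]; exact hr)
          (by rw [hicc]; exact ⟨le_trans hr.1 hs.1, le_trans hs.2 hts.2⟩) hs.1
        have h2 := hanti (by rw [hicc]; exact ⟨le_trans hr.1 hs.1, le_trans hs.2 hts.2⟩)
          (by rw [hicc]; exact hts) hs.2
        rw [hur] at h1; rw [huts] at h2; linarith
      · rw [Set.uIcc_of_ge h] at hs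
        have h1 := hanti (by rw [hicc]; exact hts)
          (by rw [hicc]; exact ⟨le_trans hts.1 hs.1, le_trans hs.2 hr.2⟩) hs.1
        have h2 := hanti (by rw [hicc]; exact ⟨le_trans hts.1 hs.1, le_trans hs.2 hr.2⟩)
          (by rw [hicc]; exact hr) hs.2
        rw [huts] at h1; rw [hur] at h2; linarith
    set m := (r + ts)/2 with hm
    have hmmem : m ∈ Set.Ioo (min r ts) (max r ts) := by
      rcases lt_or_gt_of_ne hne with h | h
      · rw [min_eq_left h.le, max_eq_right h.le]; constructor <;> [skip; skip] <;>
          rw [hm] <;> linarith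
      · rw [min_eq_right h.le, max_eq_left h.le]; constructor <;> rw [hm] <;> linarith
    have hmI : m ∈ Set.Icc α 0 := by
      rcases le_total r ts with h | h
      · rw [min_eq_left h, max_eq_right h] at hmmem
        exact ⟨le_trans hr.1 hmmem.1.le, le_trans hmmem.2.le hts.2⟩
      · rw [min_eq_right h, max_eq_left h] at hmmem
        exact ⟨le_trans hts.1 hmmem.1.le, le_trans hmmem.2.le hr.2⟩
    have hev : ∀ᶠ s in nhds m, u s = 0 := by
      have hopen : IsOpen (Set.Ioo (min r ts) (max r ts)) := isOpen_Ioo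
      filter_upwards [hopen.mem_nhds hmmem] with s hs
      apply hzero
      rw [Set.uIcc]
      exact ⟨hs.1.le, hs.2.le⟩
    have hd0 : HasDerivAt u 0 m := by
      have hc : HasDerivAt (fun _ : ℝ => (0:ℝ)) 0 m := hasDerivAt_const m 0
      exact hc.congr_of_eventuallyEq (by filter_upwards [hev] with s hs; rw [hs])
    have hdS : HasDerivAt u (-(S m)) m := hu' m (by rw [hicc]; exact hmI)
    have hSm0 : S m = 0 := by
      have := hd0.unique hdS
      linarith
    have hum : u m = 0 := hzero m (by rw [Set.uIcc]; exact ⟨hmmem.1.le, hmmem.2.le⟩)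
    have hxm0 : x0 m = ζ₀ b := by
      apply le_antisymm
      · apply hζ₀max b
        rw [hPx m (by rw [hicc]; exact hmI), hum]; norm_num
      · exact hxge m hmI
    rw [hSDs m hmI hxm0] at hSm0
    exact hDne hSm0
  have htsIoo : ts ∈ Set.Ioo α 0 := by
    constructor
    · rcases lt_or_eq_of_le hts.1 with h | h
      · exact h
      · exfalso; rw [h] at huα; rw [huts] at huα; norm_num at huα
    · rcases lt_or_eq_of_le hts.2 with h | h
      · exact h
      · exfalso; rw [h, hu0] at huts; norm_num at huts
  have husign_neg : ∀ t ∈ Set.Icc α 0, ts < t → u t < 0 := by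
    intro t ht hlt
    have h1 := hanti (by rw [hicc]; exact hts) (by rw [hicc]; exact ht) hlt.le
    rw [huts] at h1
    rcases lt_or_eq_of_le h1 with h | h
    · exact h
    · exact absurd (huniq t ht h) (ne_of_gt hlt)
  have husign_pos : ∀ t ∈ Set.Icc α 0, t < ts → 0 < u t := by
    intro t ht hlt
    have h1 := hanti (by rw [hicc]; exact ht) (by rw [hicc]; exact hts) hlt.le
    rw [huts] at h1
    rcases lt_or_eq_of_le h1 with h | h
    · exact h
    · exact absurd (huniq t ht h.symm) (ne_of_lt hlt)
  -- derivative of G ∘ x0 off the crossing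
  have hGX : ∀ y ∈ Set.Icc α 0, u y ≠ 0 →
      HasDerivAt (fun t => G (x0 t)) (2 * (if u y < 0 then 1 else -1)) y := by
    intro y hy hne
    have hyu : y ∈ Set.uIcc (0:ℝ) α := by rw [hicc]; exact hy
    have hPxy : P b (x0 y) = (u y)^2 := hPx y hyu
    have hxgt : ζ₀ b < x0 y := by
      rcases lt_or_eq_of_le (hxge y hy) with h | h
      · exact h
      · exfalso
        rw [← h, hζ₀root b] at hPxy
        exact hne (pow_eq_zero_iff two_ne_zero |>.mp hPxy.symm)
    have hG' := hGd (x0 y) hxgt (hxle y hy)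
    have hx' : HasDerivAt x0 (-2 * u y) y := hxj' y hyu 0
    have hcomp := hG'.comp y hx'
    refine hcomp.congr_deriv ?_
    symm
    show (2 : ℝ) * (if u y < 0 then 1 else -1) = f (x0 y) * (-2 * u y)
    rw [hfdef]
    simp only
    rw [hPxy, Real.sqrt_sq_eq_abs]
    rcases lt_or_gt_of_ne hne with h | h
    · rw [if_pos h, abs_of_neg h]
      rw [div_mul_eq_mul_div, one_mul, eq_div_iff (by linarith : -u y ≠ 0)]
      ring
    · rw [if_neg (not_lt.mpr h.le), abs_of_pos h]
      rw [div_mul_eq_mul_div, one_mul, eq_div_iff (by linarith : u y ≠ 0)]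
      ring
  -- piece A : on (ts, 0]
  have hA : 2 * ts = - G (ζ₁ b) := by
    have hkey : ∀ s ∈ Set.Ioc ts 0, G (x0 s) = G (ζ₁ b) + 2 * s := by
      intro s hs
      have hs0 : s ≤ 0 := hs.2
      have hsI : s ∈ Set.Icc α 0 := ⟨le_trans htsIoo.1.le hs.1.le, hs.2⟩
      have hder : ∀ y ∈ Set.uIcc s 0, HasDerivAt (fun t => G (x0 t) - 2 * t) 0 y := by
        intro y hy
        rw [Set.uIcc_of_le hs0] at hy
        have hyI : y ∈ Set.Icc α 0 := ⟨le_trans hsI.1 hy.1, hy.2⟩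
        have hyts : ts < y := lt_of_lt_of_le hs.1 hy.1
        have huy : u y < 0 := husign_neg y hyI hyts
        have h1 := hGX y hyI (ne_of_lt huy)
        rw [if_pos huy] at h1
        have h2 := h1.sub ((hasDerivAt_id y).const_mul (2:ℝ))
        refine h2.congr_deriv ?_
        symm
        ring
      have hint := intervalIntegral.integral_eq_sub_of_hasDerivAt hder
        intervalIntegrable_const
      simp at hint
      rw [hx00] at hint
      linarith
    have hevIoc : Set.Ioo ts 0 ∈ nhdsWithin ts (Set.Ioi ts) :=
      Ioo_mem_nhdsGT_of_mem ⟨le_rfl, htsIoo.2⟩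
    have htendX : Filter.Tendsto x0 (nhdsWithin ts (Set.Ioi ts)) (nhds (ζ₀ b)) := by
      have hca : ContinuousAt x0 ts :=
        (hxj' ts (by rw [hicc]; exact hts) 0).continuousAt
      have h := hca.tendsto
      rw [hxts] at h
      exact h.mono_left nhdsWithin_le_nhds
    have htendX' : Filter.Tendsto x0 (nhdsWithin ts (Set.Ioi ts))
        (nhdsWithin (ζ₀ b) (Set.Icc (ζ₀ b) (ζ₁ b))) := by
      apply tendsto_nhdsWithin_of_tendsto_nhds_of_eventually_within _ htendX
      filter_upwards [hevIoc] with s hs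
      have hsI : s ∈ Set.Icc α 0 := ⟨le_trans htsIoo.1.le hs.1.le, hs.2.le⟩
      exact ⟨hxge s hsI, hxle s hsI⟩
    have htendG : Filter.Tendsto (fun s => G (x0 s)) (nhdsWithin ts (Set.Ioi ts))
        (nhds (G (ζ₀ b))) :=
      ((hGcont.continuousWithinAt (Set.left_mem_Icc.mpr h01.le)).tendsto).comp htendX'
    have hG0 : G (ζ₀ b) = 0 := intervalIntegral.integral_same
    have htendR : Filter.Tendsto (fun s => G (ζ₁ b) + 2 * s)
        (nhdsWithin ts (Set.Ioi ts)) (nhds (G (ζ₁ b) + 2 * ts)) := by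
      apply Filter.Tendsto.mono_left _ nhdsWithin_le_nhds
      exact (tendsto_const_nhds.add ((continuous_const.mul continuous_id).tendsto ts))
    have heqev : (fun s => G (x0 s)) =ᶠ[nhdsWithin ts (Set.Ioi ts)]
        fun s => G (ζ₁ b) + 2 * s := by
      filter_upwards [hevIoc] with s hs
      exact hkey s ⟨hs.1, hs.2.le⟩
    have huniq2 := tendsto_nhds_unique (htendG.congr' heqev) htendR
    rw [hG0] at huniq2
    linarith
  -- piece B : on [α, ts)
  have hB : G (ζ₁ b) + 2 * α = 2 * ts := by
    have hkey : ∀ s ∈ Set.Ico α ts, G (x0 s) + 2 * s = G (ζ₁ b) + 2 * α := by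
      intro s hs
      have hαs : α ≤ s := hs.1
      have hsI : s ∈ Set.Icc α 0 := ⟨hs.1, le_trans hs.2.le htsIoo.2.le⟩
      have hder : ∀ y ∈ Set.uIcc α s, HasDerivAt (fun t => G (x0 t) + 2 * t) 0 y := by
        intro y hy
        rw [Set.uIcc_of_le hαs] at hy
        have hyI : y ∈ Set.Icc α 0 := ⟨hy.1, le_trans hy.2 hsI.2⟩
        have hyts : y < ts := lt_of_le_of_lt hy.2 hs.2
        have huy : 0 < u y := husign_pos y hyI hyts
        have h1 := hGX y hyI (ne_of_gt huy)
        rw [if_neg (not_lt.mpr huy.le)] at h1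
        have h2 := h1.add ((hasDerivAt_id y).const_mul (2:ℝ))
        refine h2.congr_deriv ?_
        symm
        ring
      have hint := intervalIntegral.integral_eq_sub_of_hasDerivAt hder
        intervalIntegrable_const
      simp at hint
      rw [hx0α] at hint
      linarith
    have hevIoo : Set.Ioo α ts ∈ nhdsWithin ts (Set.Iio ts) :=
      Ioo_mem_nhdsLT_of_mem ⟨htsIoo.1, le_rfl⟩
    have htendX : Filter.Tendsto x0 (nhdsWithin ts (Set.Iio ts)) (nhds (ζ₀ b)) := by
      have hca : ContinuousAt x0 ts :=
        (hxj' ts (by rw [hicc]; exact hts) 0).continuousAt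
      have h := hca.tendsto
      rw [hxts] at h
      exact h.mono_left nhdsWithin_le_nhds
    have htendX' : Filter.Tendsto x0 (nhdsWithin ts (Set.Iio ts))
        (nhdsWithin (ζ₀ b) (Set.Icc (ζ₀ b) (ζ₁ b))) := by
      apply tendsto_nhdsWithin_of_tendsto_nhds_of_eventually_within _ htendX
      filter_upwards [hevIoo] with s hs
      have hsI : s ∈ Set.Icc α 0 := ⟨hs.1.le, le_trans hs.2.le htsIoo.2.le⟩
      exact ⟨hxge s hsI, hxle s hsI⟩
    have htendG : Filter.Tendsto (fun s => G (x0 s) + 2 * s)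
        (nhdsWithin ts (Set.Iio ts)) (nhds (G (ζ₀ b) + 2 * ts)) := by
      apply Filter.Tendsto.add
      · exact ((hGcont.continuousWithinAt (Set.left_mem_Icc.mpr h01.le)).tendsto).comp
          htendX'
      · apply Filter.Tendsto.mono_left _ nhdsWithin_le_nhds
        exact (continuous_const.mul continuous_id).tendsto ts
    have hG0 : G (ζ₀ b) = 0 := intervalIntegral.integral_same
    have htendR : Filter.Tendsto (fun _ : ℝ => G (ζ₁ b) + 2 * α)
        (nhdsWithin ts (Set.Iio ts)) (nhds (G (ζ₁ b) + 2 * α)) := tendsto_const_nhds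
    have heqev : (fun s => G (x0 s) + 2 * s) =ᶠ[nhdsWithin ts (Set.Iio ts)]
        fun _ => G (ζ₁ b) + 2 * α := by
      filter_upwards [hevIoo] with s hs
      exact hkey s ⟨hs.1.le, hs.2⟩
    have huniq2 := tendsto_nhds_unique (htendG.congr' heqev) htendR
    rw [hG0] at huniq2
    linarith
  have : α = - G (ζ₁ b) := by
    rw [hA] at hB
    linarith
  rw [this]
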